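/- Let X be an n×n skeletal nilpotent matrix whose nonzero rows are exactly i_1 < ⋯ < i_k, and let K = {t = diag(t_1,…,t_n) ∈ T : t_{i_1}⁻¹ t_{X(i_1)} = ⋯ = t_{i_k}⁻¹ t_{X(i_k)}}. Then for every Hessenberg space H, the fixed-point set of K on H(X,H), namely the set of cosets {gB ∈ G/B : g⁻¹ X g ∈ H and, for all t ∈ K, g⁻¹ t g ∈ B}, is finite. -/
import Mathlib


/-- The Hessenberg space of a Hessenberg function `h` (0-based indices). -/
def hessSpace {n : ℕ} (h : Fin n → Fin n) : Set (Matrix (Fin n) (Fin n) ℂ) :=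
  {M | ∀ i j : Fin n, h j < i → M i j = 0}

/-- `X` is skeletal nilpotent: strictly upper-triangular with at most one nonzero
entry in each row and each column. -/
def Skeletal {n : ℕ} (X : Matrix (Fin n) (Fin n) ℂ) : Prop :=
  (∀ i j : Fin n, j ≤ i → X i j = 0) ∧
  (∀ i j j' : Fin n, X i j ≠ 0 → X i j' ≠ 0 → j = j') ∧
  (∀ i i' j : Fin n, X i j ≠ 0 → X i' j ≠ 0 → i = i')

/-- Upper-triangular: all entries strictly below the diagonal vanish.  A coset `gB`
equals `fB` exactly when `g⁻¹ * f` is (invertible and) upper-triangular, and `gB` is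
fixed by a diagonal `t` exactly when `g⁻¹ t g ∈ B`, i.e. `g⁻¹ (diagonal t) g` is
upper-triangular. -/
def UT {n : ℕ} (M : Matrix (Fin n) (Fin n) ℂ) : Prop :=
  ∀ i j : Fin n, j < i → M i j = 0


open Matrix Finset

namespace Stmt19Aux

variable {n : ℕ}

/-- the partial successor map of a skeletal matrix, totalized by the identity -/
noncomputable def step (X : Matrix (Fin n) (Fin n) ℂ) (i : Fin n) : Fin n :=
  if h : ∃ j, X i j ≠ 0 then h.choose else i

noncomputable def termOf (X : Matrix (Fin n) (Fin n) ℂ) (i : Fin n) : Fin n :=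
  (step X)^[n] i

lemma termOf_exists (X : Matrix (Fin n) (Fin n) ℂ) (i : Fin n) :
    ∃ k, (step X)^[k] i = termOf X i := ⟨n, rfl⟩

noncomputable def dOf (X : Matrix (Fin n) (Fin n) ℂ) (i : Fin n) : ℕ :=
  Nat.find (termOf_exists X i)

noncomputable def eOf (X : Matrix (Fin n) (Fin n) ℂ) (i : Fin n) : ℕ :=
  (n + 1) * (termOf X i : ℕ) + (n - dOf X i)

variable {X : Matrix (Fin n) (Fin n) ℂ}

lemma step_spec (hX : Skeletal X) {i : Fin n} (h : step X i ≠ i) :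
    X i (step X i) ≠ 0 := by
  unfold step at *
  split_ifs at * with hc
  · exact hc.choose_spec
  · exact absurd rfl h

lemma step_eq_of (hX : Skeletal X) {i j : Fin n} (h : X i j ≠ 0) : step X i = j := by
  have hc : ∃ j, X i j ≠ 0 := ⟨j, h⟩
  unfold step
  rw [dif_pos hc]
  exact hX.2.1 i _ j hc.choose_spec h

lemma lt_of_ne (hX : Skeletal X) {i j : Fin n} (h : X i j ≠ 0) : i < j := by
  by_contra hc
  exact h (hX.1 i j (not_lt.1 hc))

lemma le_step (hX : Skeletal X) (i : Fin n) : i ≤ step X i := by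
  by_cases h : step X i = i
  · exact h.ge
  · exact (lt_of_ne hX (step_spec hX h)).le

lemma le_iterate (hX : Skeletal X) (k : ℕ) (i : Fin n) : i ≤ (step X)^[k] i := by
  induction k generalizing i with
  | zero => simp
  | succ k ih =>
    rw [Function.iterate_succ_apply]
    exact (le_step hX i).trans (ih _)

lemma step_termOf (hX : Skeletal X) (i : Fin n) : step X (termOf X i) = termOf X i := by
  have key : ∀ k, step X ((step X)^[k] i) = (step X)^[k] i ∨ k ≤ ((step X)^[k] i : ℕ) := by
    intro k
    induction k with
    | zero => right; simp
    | succ k ih =>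
      rcases ih with h | h
      · left
        rw [Function.iterate_succ_apply', h]
        exact h
      · by_cases hf : step X ((step X)^[k] i) = (step X)^[k] i
        · left
          rw [Function.iterate_succ_apply', hf]
          exact hf
        · right
          rw [Function.iterate_succ_apply']
          have := lt_of_ne hX (step_spec hX hf)
          omega
  rcases key n with h | h
  · exact h
  · exact absurd ((step X)^[n] i).isLt (by omega)

lemma termOf_step (hX : Skeletal X) (i : Fin n) : termOf X (step X i) = termOf X i := by
  unfold termOf
  rw [← Function.iterate_succ_apply, Function.iterate_succ_apply']
  exact step_termOf hX i

lemma d_spec (X : Matrix (Fin n) (Fin n) ℂ) (i : Fin n) :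
    (step X)^[dOf X i] i = termOf X i := Nat.find_spec (termOf_exists X i)

lemma d_le (X : Matrix (Fin n) (Fin n) ℂ) (i : Fin n) : dOf X i ≤ n :=
  Nat.find_le rfl

lemma d_eq_zero (hX : Skeletal X) {i : Fin n} (h : step X i = i) : dOf X i = 0 := by
  have hit : ∀ k, (step X)^[k] i = i := by
    intro k
    induction k with
    | zero => rfl
    | succ k ih => rw [Function.iterate_succ_apply', ih, h]
  have : termOf X i = i := hit n
  exact Nat.eq_zero_of_le_zero (Nat.find_le (by simpa using this.symm))

lemma eq_term_of_d_zero {i : Fin n} (h : dOf X i = 0) : i = termOf X i := by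
  have := d_spec X i
  rwa [h] at this

lemma d_succ (hX : Skeletal X) {i : Fin n} (h : step X i ≠ i) :
    dOf X i = dOf X (step X i) + 1 := by
  have hlt : i < step X i := lt_of_ne hX (step_spec hX h)
  have hterm : termOf X (step X i) = termOf X i := termOf_step hX i
  have hne : i ≠ termOf X i := by
    have h1 : step X i ≤ termOf X (step X i) := le_iterate hX n (step X i)
    rw [hterm] at h1
    exact (hlt.trans_le h1).ne
  have hd0 : dOf X i ≠ 0 := fun h0 => hne (eq_term_of_d_zero h0)
  have h1 : dOf X i ≤ dOf X (step X i) + 1 := by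
    apply Nat.find_le
    rw [Function.iterate_succ_apply]
    rw [d_spec X (step X i), hterm]
  have h2 : dOf X (step X i) ≤ dOf X i - 1 := by
    apply Nat.find_le
    have := d_spec X i
    rcases Nat.exists_eq_succ_of_ne_zero hd0 with ⟨m, hm⟩
    rw [hm] at this ⊢
    simp only [Nat.succ_sub_one]
    rw [Function.iterate_succ_apply] at this
    rw [this, hterm]
  omega

lemma back_unique (hX : Skeletal X) :
    ∀ m (i i' : Fin n), dOf X i = m → dOf X i' = m → termOf X i = termOf X i' → i = i' := by
  intro m
  induction m with
  | zero =>
    intro i i' h h' ht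
    rw [eq_term_of_d_zero h, eq_term_of_d_zero h', ht]
  | succ m ih =>
    intro i i' h h' ht
    have hsi : step X i ≠ i := fun he => by rw [d_eq_zero hX he] at h; omega
    have hsi' : step X i' ≠ i' := fun he => by rw [d_eq_zero hX he] at h'; omega
    have hd : dOf X (step X i) = m := by have := d_succ hX hsi; omega
    have hd' : dOf X (step X i') = m := by have := d_succ hX hsi'; omega
    have hte : termOf X (step X i) = termOf X (step X i') := by
      rw [termOf_step hX, termOf_step hX, ht]
    have hss : step X i = step X i' := ih _ _ hd hd' hte
    have h1 : X i (step X i) ≠ 0 := step_spec hX hsi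
    have h2 : X i' (step X i) ≠ 0 := by rw [hss]; exact step_spec hX hsi'
    exact hX.2.2 i i' _ h1 h2

lemma e_inj (hX : Skeletal X) : Function.Injective (eOf X) := by
  intro i i' h
  unfold eOf at h
  have hb : n - dOf X i < n + 1 := by omega
  have hb' : n - dOf X i' < n + 1 := by omega
  have hmod := congrArg (· % (n + 1)) h
  have hdiv := congrArg (· / (n + 1)) h
  simp only [Nat.mul_add_mod, Nat.mod_eq_of_lt hb, Nat.mod_eq_of_lt hb'] at hmod
  have ht : (termOf X i : ℕ) = (termOf X i' : ℕ) := by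
    have e1 : ((n+1) * (termOf X i : ℕ) + (n - dOf X i)) / (n+1) = (termOf X i : ℕ) := by
      rw [Nat.mul_add_div (by omega), Nat.div_eq_of_lt hb, Nat.add_zero]
    have e2 : ((n+1) * (termOf X i' : ℕ) + (n - dOf X i')) / (n+1) = (termOf X i' : ℕ) := by
      rw [Nat.mul_add_div (by omega), Nat.div_eq_of_lt hb', Nat.add_zero]
    simpa [e1, e2] using hdiv
  have hd : dOf X i = dOf X i' := by
    have := d_le X i
    have := d_le X i'
    omega
  exact back_unique hX (dOf X i) i i' rfl hd.symm (Fin.ext ht)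

lemma e_edge (hX : Skeletal X) {i j : Fin n} (h : X i j ≠ 0) :
    eOf X j = eOf X i + 1 := by
  have hsj : step X i = j := step_eq_of hX h
  have hne : step X i ≠ i := by rw [hsj]; exact fun he => absurd (he ▸ lt_of_ne hX h) (lt_irrefl _)
  have hterm : termOf X j = termOf X i := by rw [← hsj]; exact termOf_step hX i
  have hd : dOf X i = dOf X j + 1 := by rw [← hsj]; exact d_succ hX hne
  have hdle := d_le X i
  unfold eOf
  rw [hterm]
  omega

/-- permutation matrix -/
noncomputable def pmat (ρ : Equiv.Perm (Fin n)) : Matrix (Fin n) (Fin n) ℂ :=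
  Matrix.of fun i k => if ρ k = i then (1 : ℂ) else 0

lemma pmat_mul_transpose (ρ : Equiv.Perm (Fin n)) : pmat ρ * (pmat ρ)ᵀ = 1 := by
  ext i j
  rw [Matrix.mul_apply]
  simp only [pmat, Matrix.transpose_apply, Matrix.of_apply]
  simp only [show ∀ m x, (ρ m = x) = (m = ρ.symm x) from fun m x => by
    rw [Equiv.apply_eq_iff_eq_symm_apply]]
  rw [Finset.sum_eq_single (ρ.symm i)]
  · by_cases hij : i = j
    · subst hij; simp [Matrix.one_apply]
    · have : ¬ (ρ.symm i = ρ.symm j) := fun he => hij (ρ.symm.injective he)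
      simp [Matrix.one_apply, hij, this]
  · intro b _ hb
    simp [hb]
  · simp

lemma transpose_mul_pmat (ρ : Equiv.Perm (Fin n)) : (pmat ρ)ᵀ * pmat ρ = 1 := by
  ext i j
  rw [Matrix.mul_apply]
  simp only [pmat, Matrix.transpose_apply, Matrix.of_apply]
  simp only [show ∀ m x, (ρ m = x) = (m = ρ.symm x) from fun m x => by
    rw [Equiv.apply_eq_iff_eq_symm_apply]]
  rw [Finset.sum_eq_single (ρ i)]
  · simp [Matrix.one_apply, Equiv.symm_apply_eq, eq_comm]
  · intro b _ hb
    simp only [ite_mul, one_mul, zero_mul, ite_eq_right_iff]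
    intro hbi
    exact absurd (by rw [hbi, Equiv.apply_symm_apply]) hb
  · simp

lemma isUnit_pmat (ρ : Equiv.Perm (Fin n)) : IsUnit (pmat ρ) :=
  (Matrix.isUnit_iff_isUnit_det _).2 (Matrix.isUnit_det_of_right_inverse (pmat_mul_transpose ρ))

/-- Key linear algebra lemma: if `g⁻¹ D g` is upper triangular for a regular diagonal
`D = diagonal t`, then `gB` is a permutation coset. -/
lemma key {g U : Matrix (Fin n) (Fin n) ℂ} {t : Fin n → ℂ}
    (hg : IsUnit g) (ht : Function.Injective t) (hU : UT U)
    (hrel : g * U = Matrix.diagonal t * g) :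
    ∃ ρ : Equiv.Perm (Fin n), UT (g⁻¹ * pmat ρ) := by
  have hdet : IsUnit g.det := (Matrix.isUnit_iff_isUnit_det g).1 hg
  -- each diagonal entry of U is an eigenvalue
  have eig : ∀ k : Fin n, ∃ i, t i = U k k := by
    intro k
    set c := U k k with hc
    set M := U - Matrix.diagonal (fun _ => c) with hM
    have hMut : Matrix.BlockTriangular M id := by
      intro i j hij
      have h1 : U i j = 0 := hU i j hij
      have h2 : Matrix.diagonal (fun _ => c) i j = 0 :=
        Matrix.diagonal_apply_ne _ (ne_of_gt hij)
      rw [hM, Matrix.sub_apply, h1, h2, sub_zero]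
    have hdetM : M.det = 0 := by
      rw [Matrix.det_of_upperTriangular hMut]
      apply Finset.prod_eq_zero (Finset.mem_univ k)
      simp [hM, hc]
    have hgM : g * M = Matrix.diagonal (fun i => t i - c) * g := by
      have h1 : Matrix.diagonal (fun i => t i - c)
          = Matrix.diagonal t - Matrix.diagonal (fun _ => c) := by
        rw [← Matrix.diagonal_sub]
      have h2 : Matrix.diagonal (fun _ : Fin n => c) = c • (1 : Matrix (Fin n) (Fin n) ℂ) := by
        rw [smul_one_eq_diagonal]
      rw [hM, Matrix.mul_sub, hrel, h1, Matrix.sub_mul, h2, mul_smul_one, smul_one_mul]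
    have hdetD : (Matrix.diagonal fun i => t i - c).det = 0 := by
      have := congrArg Matrix.det hgM
      rw [Matrix.det_mul, Matrix.det_mul, hdetM, mul_zero] at this
      rcases mul_eq_zero.1 this.symm with h | h
      · exact h
      · exact absurd h hdet.ne_zero
    rw [Matrix.det_diagonal] at hdetD
    rcases Finset.prod_eq_zero_iff.1 hdetD with ⟨i, _, hi⟩
    exact ⟨i, sub_eq_zero.1 hi⟩
  classical
  choose σ hσ using eig
  -- main vanishing claim
  have hzero : ∀ (K : ℕ) (k : Fin n), (k : ℕ) < K → ∀ i,
      (∀ m, m ≤ k → t i ≠ U m m) → g i k = 0 := by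
    intro K
    induction K with
    | zero => intro k hk; omega
    | succ K IH =>
      intro k hk i hi
      have hrow : (g * U) i k = (Matrix.diagonal t * g) i k := by rw [hrel]
      rw [Matrix.mul_apply, Matrix.diagonal_mul] at hrow
      have hsum : ∑ m, g i m * U m k = g i k * U k k := by
        apply Finset.sum_eq_single k
        · intro m _ hm
          rcases lt_or_gt_of_ne hm with hlt | hgt
          · rw [IH m (by omega) i (fun m' hm' => hi m' (hm'.trans hlt.le)), zero_mul]
          · rw [hU m k hgt, mul_zero]
        · intro habs; exact absurd (Finset.mem_univ k) habs
      rw [hsum] at hrow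
      have : g i k * (U k k - t i) = 0 := by linear_combination hrow
      rcases mul_eq_zero.1 this with h | h
      · exact h
      · exact absurd (sub_eq_zero.1 h).symm (hi k le_rfl)
  have hgz : ∀ i k, (∀ m, m ≤ k → σ m ≠ i) → g i k = 0 := by
    intro i k hk
    refine hzero n k k.isLt i fun m hm hti => hk m hm (ht ?_)
    rw [hσ m, hti]
  -- σ is surjective hence bijective
  have hsurj : Function.Surjective σ := by
    intro i
    by_contra hni
    push_neg at hni
    have : g.det = 0 := Matrix.det_eq_zero_of_row_eq_zero i fun k =>
      hgz i k fun m _ => hni m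
    exact hdet.ne_zero this
  have hbij : Function.Bijective σ := ⟨Finite.injective_iff_surjective.2 hsurj, hsurj⟩
  let ρ : Equiv.Perm (Fin n) := Equiv.ofBijective σ hbij
  have hρ : ∀ k, ρ k = σ k := fun k => rfl
  refine ⟨ρ, ?_⟩
  have hQg : UT ((pmat ρ)ᵀ * g) := by
    intro i k hki
    rw [Matrix.mul_apply]
    simp only [pmat, Matrix.transpose_apply, Matrix.of_apply]
    rw [Finset.sum_eq_single (ρ i)]
    · rw [if_pos rfl, one_mul]
      refine hgz (ρ i) k fun m hm hemi => ?_
      have : m = i := ρ.injective hemi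
      omega
    · intro b _ hb
      rw [if_neg (fun he => hb he.symm), zero_mul]
    · intro habs; exact absurd (Finset.mem_univ _) habs
  have hPt : IsUnit ((pmat ρ)ᵀ) :=
    (Matrix.isUnit_iff_isUnit_det _).2 (Matrix.isUnit_det_of_right_inverse (transpose_mul_pmat ρ))
  have hQgu : IsUnit ((pmat ρ)ᵀ * g) := hPt.mul hg
  have hinv : g⁻¹ * pmat ρ = ((pmat ρ)ᵀ * g)⁻¹ := by
    rw [Matrix.mul_inv_rev, Matrix.inv_eq_right_inv (transpose_mul_pmat ρ)]
  rw [hinv]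
  obtain ⟨inst⟩ := hQgu.nonempty_invertible
  exact fun i j hij =>
    Matrix.blockTriangular_inv_of_blockTriangular (fun a b hab => hQg a b hab) hij

end Stmt19Aux

open Stmt19Aux

/-- Let `X` be skeletal nilpotent and let `K ⊆ T` be the subtorus of
diagonal matrices `t` whose ratios `t_i⁻¹ t_{X(i)}` agree over all nonzero rows `i`
of `X`.  Then for every Hessenberg space `H`, the fixed-point set of `K` on
`H(X,H)` — the set of cosets `gB` with `g⁻¹ X g ∈ H` and `g⁻¹ t g ∈ B` for all
`t ∈ K` — is finite: there is a finite set `F` of invertible matrices such that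
every such `g` lies in the coset `fB` of some `f ∈ F`. -/
theorem stmt19 {n : ℕ} (X : Matrix (Fin n) (Fin n) ℂ) (hX : Skeletal X)
    (h : Fin n → Fin n) (hh1 : ∀ i, i ≤ h i) (hh2 : Monotone h) :
    ∃ F : Finset (Matrix (Fin n) (Fin n) ℂ),
      ∀ g : Matrix (Fin n) (Fin n) ℂ, IsUnit g → g⁻¹ * X * g ∈ hessSpace h →
        (∀ t : Fin n → ℂ, (∀ i, t i ≠ 0) →
          (∀ i i' j j' : Fin n, X i j ≠ 0 → X i' j' ≠ 0 →
            (t i)⁻¹ * t j = (t i')⁻¹ * t j') →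
          UT (g⁻¹ * Matrix.diagonal t * g)) →
        ∃ f ∈ F, IsUnit f ∧ UT (g⁻¹ * f) := by
  classical
  refine ⟨Finset.image pmat Finset.univ, ?_⟩
  intro g hg _ hfix
  set t : Fin n → ℂ := fun i => (2 : ℂ) ^ (eOf X i) with htdef
  have htnz : ∀ i, t i ≠ 0 := fun i => pow_ne_zero _ two_ne_zero
  have htinj : Function.Injective t := by
    intro a b hab
    apply e_inj hX
    have : ((2 : ℕ) : ℂ) ^ eOf X a = ((2 : ℕ) : ℂ) ^ eOf X b := by
      simpa [htdef] using hab
    rw [← Nat.cast_pow, ← Nat.cast_pow] at this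
    exact Nat.pow_right_injective le_rfl (Nat.cast_injective this)
  have hratio : ∀ i i' j j' : Fin n, X i j ≠ 0 → X i' j' ≠ 0 →
      (t i)⁻¹ * t j = (t i')⁻¹ * t j' := by
    have single : ∀ i j : Fin n, X i j ≠ 0 → (t i)⁻¹ * t j = 2 := by
      intro i j hij
      rw [htdef]
      simp only
      rw [e_edge hX hij, pow_succ]
      exact inv_mul_cancel_left₀ (pow_ne_zero _ (by norm_num : (2:ℂ) ≠ 0)) 2
    intro i i' j j' h1 h2
    rw [single i j h1, single i' j' h2]
  have hUT : UT (g⁻¹ * Matrix.diagonal t * g) := hfix t htnz hratio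
  have hdet : IsUnit g.det := (Matrix.isUnit_iff_isUnit_det g).1 hg
  have hrel : g * (g⁻¹ * Matrix.diagonal t * g) = Matrix.diagonal t * g := by
    rw [← Matrix.mul_assoc, ← Matrix.mul_assoc, Matrix.mul_nonsing_inv _ hdet, Matrix.one_mul]
  obtain ⟨ρ, hρ⟩ := key hg htinj hUT hrel
  exact ⟨pmat ρ, Finset.mem_image_of_mem _ (Finset.mem_univ ρ), isUnit_pmat ρ, hρ⟩
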